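/- There exists a fixed-point-free involution on the collection of dominating sets of the m×n king graph other than T (the set of vertices with both coordinates odd) that changes the parity of the set's cardinality. Consequently, the number of dominating sets of even size differs from the number of odd size by exactly 1, the excess being on the side of the parity of ⌈m/2⌉·⌈n/2⌉. -/

import Mathlib

/-- The `m × n` king graph: vertices are squares of an `m × n` board
(vertex `p` represents board square `(p.1.val + 1, p.2.val + 1)`), with
`p` adjacent to `q` iff `p ≠ q` and `max |x−x'| |y−y'| = 1`. -/
def kingGraph (m n : ℕ) : SimpleGraph (Fin m × Fin n) where
  Adj p q := p ≠ q ∧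
    max ((p.1.val : ℤ) - q.1.val).natAbs ((p.2.val : ℤ) - q.2.val).natAbs = 1
  symm := by
    constructor
    intro p q ⟨h1, h2⟩
    refine ⟨h1.symm, ?_⟩
    rw [show ((q.1.val : ℤ) - p.1.val) = -((p.1.val : ℤ) - q.1.val) by ring,
      show ((q.2.val : ℤ) - p.2.val) = -((p.2.val : ℤ) - q.2.val) by ring,
      Int.natAbs_neg, Int.natAbs_neg]
    exact h2
  loopless := by constructor; intro p ⟨h1, _⟩; exact h1 rfl

instance (m n : ℕ) : DecidableRel (kingGraph m n).Adj :=
  fun p q => decidable_of_iff (p ≠ q ∧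
    max ((p.1.val : ℤ) - q.1.val).natAbs ((p.2.val : ℤ) - q.2.val).natAbs = 1) Iff.rfl

/-- `S` is a dominating set: every vertex is in `S` or adjacent to a member of `S`. -/
def IsDomSet {V : Type*} (G : SimpleGraph V) (S : Finset V) : Prop :=
  ∀ v, v ∈ S ∨ ∃ u ∈ S, G.Adj u v

instance {V : Type*} [Fintype V] [DecidableEq V] (G : SimpleGraph V)
    [DecidableRel G.Adj] : DecidablePred (IsDomSet G) :=
  fun _ => inferInstanceAs (Decidable (∀ _, _ ∨ _))

namespace KingParity
open scoped symmDiff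

/-- `|a - b| ≤ 1` for naturals. -/
def near (a b : ℕ) : Prop := a ≤ b + 1 ∧ b ≤ a + 1

def tset (m n : ℕ) : Finset (Fin m × Fin n) :=
  Finset.univ.filter (fun p : Fin m × Fin n => Odd (p.1.val + 1) ∧ Odd (p.2.val + 1))

lemma mem_tset {m n : ℕ} {p : Fin m × Fin n} :
    p ∈ tset m n ↔ p.1.val % 2 = 0 ∧ p.2.val % 2 = 0 := by
  simp [tset, Nat.odd_add_one, Nat.not_odd_iff_even, Nat.even_iff]

lemma prod_ne_iff {m n : ℕ} {u v : Fin m × Fin n} :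
    u ≠ v ↔ (u.1.val ≠ v.1.val ∨ u.2.val ≠ v.2.val) := by
  simp only [Ne, Prod.ext_iff, Fin.ext_iff]; tauto

lemma adj_iff {m n : ℕ} {u v : Fin m × Fin n} :
    (kingGraph m n).Adj u v ↔ u ≠ v ∧ near u.1.val v.1.val ∧ near u.2.val v.2.val := by
  show (u ≠ v ∧ _) ↔ _
  rw [prod_ne_iff]
  unfold near
  constructor
  · rintro ⟨h1, h2⟩; exact ⟨h1, by omega⟩
  · rintro ⟨h1, h2⟩; exact ⟨h1, by omega⟩

lemma dom_iff {m n : ℕ} {S : Finset (Fin m × Fin n)} :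
    IsDomSet (kingGraph m n) S ↔
      ∀ v : Fin m × Fin n, ∃ u ∈ S, near u.1.val v.1.val ∧ near u.2.val v.2.val := by
  constructor
  · intro hd v
    rcases hd v with h | ⟨u, hu, ha⟩
    · exact ⟨v, h, ⟨by omega, by omega⟩, ⟨by omega, by omega⟩⟩
    · exact ⟨u, hu, (adj_iff.mp ha).2⟩
  · intro hd v
    obtain ⟨u, hu, h1, h2⟩ := hd v
    by_cases huv : u = v
    · exact Or.inl (huv ▸ hu)
    · exact Or.inr ⟨u, hu, adj_iff.mpr ⟨huv, h1, h2⟩⟩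

/-- lexicographic key of the 2×2 block of a cell . -/
def key {m n : ℕ} (p : Fin m × Fin n) : ℕ := p.1.val / 2 * (n + 1) + p.2.val / 2

lemma key_div {m n : ℕ} (p : Fin m × Fin n) : key p / (n + 1) = p.1.val / 2 := by
  have h2 : p.2.val / 2 < n + 1 := lt_of_le_of_lt (Nat.div_le_self _ _)
    (lt_of_lt_of_le p.2.isLt (Nat.le_succ n))
  unfold key
  rw [Nat.add_comm, Nat.mul_comm, Nat.add_mul_div_left _ _ (Nat.succ_pos n),
    Nat.div_eq_of_lt h2, Nat.zero_add]

lemma key_mod {m n : ℕ} (p : Fin m × Fin n) : key p % (n + 1) = p.2.val / 2 := by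
  have h2 : p.2.val / 2 < n + 1 := lt_of_le_of_lt (Nat.div_le_self _ _)
    (lt_of_lt_of_le p.2.isLt (Nat.le_succ n))
  unfold key
  rw [Nat.add_comm, Nat.mul_comm, Nat.add_mul_mod_self_left, Nat.mod_eq_of_lt h2]

lemma key_lt {n a b x y : ℕ} (hy : y ≤ n) (h : x < a ∨ (x = a ∧ y < b)) :
    x * (n + 1) + y < a * (n + 1) + b := by
  rcases h with h | ⟨rfl, h⟩
  · have h1 : (x + 1) * (n + 1) ≤ a * (n + 1) := Nat.mul_le_mul_right _ h
    nlinarith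
  · omega

/-- cells where `S` deviates from `T`. -/
def dev (m n : ℕ) (S : Finset (Fin m × Fin n)) : Finset (Fin m × Fin n) := S ∆ tset m n

/-- minimal block key among deviating cells. -/
def kval (m n : ℕ) (S : Finset (Fin m × Fin n)) (h : (dev m n S).Nonempty) : ℕ :=
  (dev m n S).inf' h key

lemma kval_bounds (m n : ℕ) (S : Finset (Fin m × Fin n)) (h : (dev m n S).Nonempty) :
    2 * (kval m n S h / (n + 1)) < m ∧ 2 * (kval m n S h % (n + 1)) < n := by
  obtain ⟨p, _, hk⟩ := Finset.exists_mem_eq_inf' h key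
  unfold kval
  rw [hk, key_div, key_mod]
  have h1 := p.1.isLt
  have h2 := p.2.isLt
  omega

/-- corner cell of the first deviating block. -/
def tcell (m n : ℕ) (S : Finset (Fin m × Fin n)) (h : (dev m n S).Nonempty) : Fin m × Fin n :=
  (⟨2 * (kval m n S h / (n + 1)), (kval_bounds m n S h).1⟩,
   ⟨2 * (kval m n S h % (n + 1)), (kval_bounds m n S h).2⟩)

lemma tcell_fst (m n : ℕ) (S : Finset (Fin m × Fin n)) (h : (dev m n S).Nonempty) :
    (tcell m n S h).1.val = 2 * (kval m n S h / (n + 1)) := rfl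

lemma tcell_snd (m n : ℕ) (S : Finset (Fin m × Fin n)) (h : (dev m n S).Nonempty) :
    (tcell m n S h).2.val = 2 * (kval m n S h % (n + 1)) := rfl

lemma tcell_mem_tset (m n : ℕ) (S : Finset (Fin m × Fin n)) (h : (dev m n S).Nonempty) :
    tcell m n S h ∈ tset m n := by
  rw [mem_tset, tcell_fst, tcell_snd]; omega

lemma key_tcell (m n : ℕ) (S : Finset (Fin m × Fin n)) (h : (dev m n S).Nonempty) :
    key (tcell m n S h) = kval m n S h := by
  unfold key
  rw [tcell_fst, tcell_snd]
  have e1 : 2 * (kval m n S h / (n + 1)) / 2 = kval m n S h / (n + 1) := by omega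
  have e2 : 2 * (kval m n S h % (n + 1)) / 2 = kval m n S h % (n + 1) := by omega
  rw [e1, e2, Nat.mul_comm, Nat.div_add_mod]

lemma kval_le (m n : ℕ) (S : Finset (Fin m × Fin n)) (h : (dev m n S).Nonempty)
    {q : Fin m × Fin n} (hq : q ∈ dev m n S) : kval m n S h ≤ key q :=
  Finset.inf'_le _ hq

lemma prefix_eq (m n : ℕ) (S : Finset (Fin m × Fin n)) (h : (dev m n S).Nonempty)
    {q : Fin m × Fin n} (hq : key q < kval m n S h) : (q ∈ S ↔ q ∈ tset m n) := by
  by_contra hc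
  have : q ∈ dev m n S := by
    rw [dev, Finset.mem_symmDiff]
    tauto
  exact absurd (kval_le m n S h this) (by omega)


section
variable {m n : ℕ} {S : Finset (Fin m × Fin n)}

lemma kval_eq (h : (dev m n S).Nonempty) :
    kval m n S h = kval m n S h / (n + 1) * (n + 1) + kval m n S h % (n + 1) :=
  (Nat.div_add_mod' _ _).symm

/-- The first deviating block contains an element of `S` other than its corner. -/
lemma exists_c (h : (dev m n S).Nonempty) (hd : IsDomSet (kingGraph m n) S) :
    ∃ c ∈ S, c ≠ tcell m n S h ∧ key c = kval m n S h := by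
  obtain ⟨p, hp, hk0⟩ := Finset.exists_mem_eq_inf' h key
  have hk : kval m n S h = key p := hk0
  by_cases hpS : p ∈ S
  · refine ⟨p, hpS, ?_, hk.symm⟩
    intro e
    have h1 : p ∉ tset m n := by
      have h2 := hp
      rw [dev, Finset.mem_symmDiff] at h2
      tauto
    exact h1 (e ▸ tcell_mem_tset m n S h)
  · have hpT : p ∈ tset m n := by
      have h2 := hp
      rw [dev, Finset.mem_symmDiff] at h2
      tauto
    rw [mem_tset] at hpT
    have e1 : p.1.val / 2 = kval m n S h / (n + 1) := by rw [hk, key_div]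
    have e2 : p.2.val / 2 = kval m n S h % (n + 1) := by rw [hk, key_mod]
    have hpt : p = tcell m n S h := by
      refine Prod.ext_iff.mpr ⟨Fin.ext ?_, Fin.ext ?_⟩
      · rw [tcell_fst]; omega
      · rw [tcell_snd]; omega
    rw [hpt] at hpS
    obtain ⟨u, huS, hu1, hu2⟩ := dom_iff.mp hd (tcell m n S h)
    rw [tcell_fst] at hu1
    rw [tcell_snd] at hu2
    unfold near at hu1 hu2
    have hu2n : u.2.val / 2 ≤ n := by have := u.2.isLt; omega
    -- first coordinate block of u equals that of the corner
    have hA : u.1.val / 2 = kval m n S h / (n + 1) := by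
      by_contra hne
      have hx : u.1.val % 2 = 1 ∧ u.1.val / 2 + 1 = kval m n S h / (n + 1) := by omega
      have hklt : key u < kval m n S h := by
        rw [kval_eq h]
        exact key_lt hu2n (Or.inl (by omega))
      have huT := (prefix_eq m n S h hklt).mp huS
      rw [mem_tset] at huT
      omega
    have hB : u.2.val / 2 = kval m n S h % (n + 1) := by
      by_contra hne
      have hx : u.2.val % 2 = 1 ∧ u.2.val / 2 + 1 = kval m n S h % (n + 1) := by omega
      have hklt : key u < kval m n S h := by
        rw [kval_eq h]
        exact key_lt hu2n (Or.inr ⟨hA, by omega⟩)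
      have huT := (prefix_eq m n S h hklt).mp huS
      rw [mem_tset] at huT
      omega
    refine ⟨u, huS, ?_, ?_⟩
    · intro e
      rw [e] at huS
      exact hpS huS
    · rw [kval_eq h]
      unfold key
      rw [hA, hB]

lemma c_block_fst {c : Fin m × Fin n} (h : (dev m n S).Nonempty)
    (hkc : key c = kval m n S h) : c.1.val / 2 = kval m n S h / (n + 1) := by
  rw [← hkc, key_div]

lemma c_block_snd {c : Fin m × Fin n} (h : (dev m n S).Nonempty)
    (hkc : key c = kval m n S h) : c.2.val / 2 = kval m n S h % (n + 1) := by
  rw [← hkc, key_mod]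

lemma c_not_tset {c : Fin m × Fin n} (h : (dev m n S).Nonempty)
    (hct : c ≠ tcell m n S h) (hkc : key c = kval m n S h) : c ∉ tset m n := by
  have h1 := c_block_fst h hkc
  have h2 := c_block_snd h hkc
  rw [mem_tset]
  rintro ⟨e1, e2⟩
  apply hct
  refine Prod.ext_iff.mpr ⟨Fin.ext ?_, Fin.ext ?_⟩
  · rw [tcell_fst]; omega
  · rw [tcell_snd]; omega

/-- Toggling the corner of the first deviating block preserves domination. -/
lemma dom_toggle (h : (dev m n S).Nonempty) (hd : IsDomSet (kingGraph m n) S) :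
    IsDomSet (kingGraph m n) (S ∆ {tcell m n S h}) := by
  obtain ⟨c, hcS, hct, hkc⟩ := exists_c h hd
  rw [dom_iff]
  intro v
  obtain ⟨u, huS, hu1, hu2⟩ := dom_iff.mp hd v
  by_cases hut : u = tcell m n S h
  · subst hut
    rw [tcell_fst] at hu1
    rw [tcell_snd] at hu2
    unfold near at hu1 hu2
    by_cases hb : v.1.val / 2 = kval m n S h / (n + 1) ∧ v.2.val / 2 = kval m n S h % (n + 1)
    · -- v lies in the deviating block itself; `c` dominates it
      have hc1 := c_block_fst h hkc
      have hc2 := c_block_snd h hkc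
      refine ⟨c, ?_, ?_, ?_⟩
      · rw [Finset.mem_symmDiff]
        exact Or.inl ⟨hcS, by simpa using hct⟩
      · unfold near; omega
      · unfold near; omega
    · -- v lies in an earlier block; its own block corner is in `S`
      have hv1 : v.1.val / 2 ≤ kval m n S h / (n + 1) := by omega
      have hv2 : v.2.val / 2 ≤ kval m n S h % (n + 1) := by omega
      have hvm : 2 * (v.1.val / 2) < m := by have := v.1.isLt; omega
      have hvn : 2 * (v.2.val / 2) < n := by have := v.2.isLt; omega
      set w : Fin m × Fin n := (⟨2 * (v.1.val / 2), hvm⟩, ⟨2 * (v.2.val / 2), hvn⟩) with hw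
      have hwf : w.1.val = 2 * (v.1.val / 2) := rfl
      have hws : w.2.val = 2 * (v.2.val / 2) := rfl
      have hkw : key w < kval m n S h := by
        have e : key w = v.1.val / 2 * (n + 1) + v.2.val / 2 := by
          have r1 : 2 * (v.1.val / 2) / 2 = v.1.val / 2 := by omega
          have r2 : 2 * (v.2.val / 2) / 2 = v.2.val / 2 := by omega
          unfold key
          rw [hwf, hws, r1, r2]
        rw [e, kval_eq h]
        exact key_lt (by have := v.2.isLt; omega) (by omega)
      have hwS : w ∈ S := (prefix_eq m n S h hkw).mpr
        (mem_tset.mpr ⟨by rw [hwf]; omega, by rw [hws]; omega⟩)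
      have hwt : w ≠ tcell m n S h := by
        intro e
        rw [e] at hkw
        rw [key_tcell] at hkw
        omega
      refine ⟨w, ?_, ?_, ?_⟩
      · rw [Finset.mem_symmDiff]
        exact Or.inl ⟨hwS, by simpa using hwt⟩
      · unfold near; rw [hwf]; omega
      · unfold near; rw [hws]; omega
  · refine ⟨u, ?_, hu1, hu2⟩
    rw [Finset.mem_symmDiff]
    exact Or.inl ⟨huS, by simpa using hut⟩

lemma toggle_ne_tset (h : (dev m n S).Nonempty) (hd : IsDomSet (kingGraph m n) S) :
    S ∆ {tcell m n S h} ≠ tset m n := by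
  obtain ⟨c, hcS, hct, hkc⟩ := exists_c h hd
  have hcT := c_not_tset h hct hkc
  have hcmem : c ∈ S ∆ {tcell m n S h} := by
    rw [Finset.mem_symmDiff]
    exact Or.inl ⟨hcS, by simpa using hct⟩
  intro e
  rw [e] at hcmem
  exact hcT hcmem

lemma dev_toggle_nonempty (h : (dev m n S).Nonempty) (hd : IsDomSet (kingGraph m n) S) :
    (dev m n (S ∆ {tcell m n S h})).Nonempty := by
  obtain ⟨c, hcS, hct, hkc⟩ := exists_c h hd
  refine ⟨c, ?_⟩
  rw [dev, Finset.mem_symmDiff]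
  left
  constructor
  · rw [Finset.mem_symmDiff]
    exact Or.inl ⟨hcS, by simpa using hct⟩
  · exact c_not_tset h hct hkc

lemma kval_toggle (h : (dev m n S).Nonempty) (hd : IsDomSet (kingGraph m n) S)
    (h' : (dev m n (S ∆ {tcell m n S h})).Nonempty) :
    kval m n (S ∆ {tcell m n S h}) h' = kval m n S h := by
  obtain ⟨c, hcS, hct, hkc⟩ := exists_c h hd
  apply le_antisymm
  · have hcmem : c ∈ dev m n (S ∆ {tcell m n S h}) := by
      rw [dev, Finset.mem_symmDiff]
      left
      constructor
      · rw [Finset.mem_symmDiff]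
        exact Or.inl ⟨hcS, by simpa using hct⟩
      · exact c_not_tset h hct hkc
    have := kval_le _ _ _ h' hcmem
    rwa [hkc] at this
  · apply Finset.le_inf'
    intro q hq
    by_cases hqt : q = tcell m n S h
    · rw [hqt, key_tcell]
    · apply kval_le m n S h
      rw [dev, Finset.mem_symmDiff] at hq ⊢
      simp only [Finset.mem_symmDiff, Finset.mem_singleton] at hq
      tauto

lemma tcell_toggle (h : (dev m n S).Nonempty) (hd : IsDomSet (kingGraph m n) S)
    (h' : (dev m n (S ∆ {tcell m n S h})).Nonempty) :
    tcell m n (S ∆ {tcell m n S h}) h' = tcell m n S h := by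
  have hk := kval_toggle h hd h'
  refine Prod.ext_iff.mpr ⟨Fin.ext ?_, Fin.ext ?_⟩
  · rw [tcell_fst, tcell_fst, hk]
  · rw [tcell_snd, tcell_snd, hk]

end

def invol (m n : ℕ) : Finset (Fin m × Fin n) → Finset (Fin m × Fin n) := fun S =>
  if h : (dev m n S).Nonempty ∧ IsDomSet (kingGraph m n) S then S ∆ {tcell m n S h.1} else S

lemma dev_nonempty_of_ne {m n : ℕ} {S : Finset (Fin m × Fin n)} (hS : S ≠ tset m n) :
    (dev m n S).Nonempty := by
  rw [dev, Finset.nonempty_iff_ne_empty]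
  intro hc
  exact hS (by simpa [symmDiff_eq_bot] using hc)

lemma invol_spec {m n : ℕ} {S : Finset (Fin m × Fin n)}
    (hd : IsDomSet (kingGraph m n) S) (hS : S ≠ tset m n) :
    IsDomSet (kingGraph m n) (invol m n S) ∧ invol m n S ≠ tset m n ∧
      invol m n (invol m n S) = S ∧ invol m n S ≠ S ∧
      (Even (invol m n S).card ↔ ¬ Even S.card) := by
  have h := dev_nonempty_of_ne hS
  have e : invol m n S = S ∆ {tcell m n S h} := dif_pos ⟨h, hd⟩
  have hd' : IsDomSet (kingGraph m n) (invol m n S) := by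
    rw [e]; exact dom_toggle h hd
  have hS' : invol m n S ≠ tset m n := by
    rw [e]; exact toggle_ne_tset h hd
  refine ⟨hd', hS', ?_, ?_, ?_⟩
  · rw [e]
    have h' : (dev m n (S ∆ {tcell m n S h})).Nonempty := dev_toggle_nonempty h hd
    have e' : invol m n (S ∆ {tcell m n S h}) =
        (S ∆ {tcell m n S h}) ∆ {tcell m n (S ∆ {tcell m n S h}) h'} :=
      dif_pos ⟨h', dom_toggle h hd⟩
    rw [e', tcell_toggle h hd h']
    exact symmDiff_symmDiff_self' S {tcell m n S h} ▸ (by rw [symmDiff_assoc, symmDiff_self, symmDiff_bot])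
  · rw [e]
    intro hEq
    have h1 := Finset.ext_iff.mp hEq (tcell m n S h)
    rw [Finset.mem_symmDiff, Finset.mem_singleton] at h1
    tauto
  · rw [e]
    by_cases htS : tcell m n S h ∈ S
    · have e2 : S ∆ {tcell m n S h} = S.erase (tcell m n S h) := by
        ext q
        rw [Finset.mem_symmDiff, Finset.mem_erase, Finset.mem_singleton]
        by_cases hq : q = tcell m n S h <;> simp [hq, htS]
      have hpos : 0 < S.card := Finset.card_pos.mpr ⟨_, htS⟩
      rw [e2, Finset.card_erase_of_mem htS, Nat.even_iff, Nat.even_iff]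
      omega
    · have e2 : S ∆ {tcell m n S h} = insert (tcell m n S h) S := by
        ext q
        rw [Finset.mem_symmDiff, Finset.mem_insert, Finset.mem_singleton]
        by_cases hq : q = tcell m n S h <;> simp [hq, htS]
      rw [e2, Finset.card_insert_of_notMem htS, Nat.even_iff, Nat.even_iff]
      omega

lemma tset_dom (m n : ℕ) : IsDomSet (kingGraph m n) (tset m n) := by
  rw [dom_iff]
  intro v
  have hm : 2 * (v.1.val / 2) < m := by have := v.1.isLt; omega
  have hn : 2 * (v.2.val / 2) < n := by have := v.2.isLt; omega
  refine ⟨(⟨2 * (v.1.val / 2), hm⟩, ⟨2 * (v.2.val / 2), hn⟩), ?_, ?_, ?_⟩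
  · rw [mem_tset]
    exact ⟨by show 2 * (v.1.val / 2) % 2 = 0; omega, by show 2 * (v.2.val / 2) % 2 = 0; omega⟩
  · show near (2 * (v.1.val / 2)) v.1.val
    unfold near; omega
  · show near (2 * (v.2.val / 2)) v.2.val
    unfold near; omega

lemma neg_one_pow_add_eq_zero {a b : ℕ} (h : Even a ↔ ¬ Even b) :
    ((-1 : ℤ)) ^ a + (-1) ^ b = 0 := by
  rcases Nat.even_or_odd a with ha | ha
  · have hb : Odd b := Nat.not_even_iff_odd.mp (h.mp ha)
    rw [ha.neg_one_pow, hb.neg_one_pow]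
    ring
  · have ha' : ¬ Even a := Nat.not_even_iff_odd.mpr ha
    have hb : Even b := by tauto
    rw [ha.neg_one_pow, hb.neg_one_pow]
    ring

lemma card_even_range (m : ℕ) :
    ((Finset.range m).filter (fun i => i % 2 = 0)).card = (m + 1) / 2 := by
  induction m with
  | zero => simp
  | succ m ih =>
    rw [Finset.range_add_one, Finset.filter_insert]
    by_cases h : m % 2 = 0
    · rw [if_pos h, Finset.card_insert_of_notMem
        (fun hc => Finset.notMem_range_self (Finset.mem_of_mem_filter _ hc)), ih]
      omega
    · rw [if_neg h, ih]
      omega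

lemma card_even_fin (m : ℕ) :
    ((Finset.univ : Finset (Fin m)).filter (fun i => i.val % 2 = 0)).card = (m + 1) / 2 := by
  rw [← card_even_range m]
  apply Finset.card_bij (fun (a : Fin m) _ => a.val)
  · intro a ha
    rw [Finset.mem_filter] at ha ⊢
    exact ⟨Finset.mem_range.mpr a.isLt, ha.2⟩
  · intro a _ b _ hab
    exact Fin.ext hab
  · intro b hb
    rw [Finset.mem_filter, Finset.mem_range] at hb
    exact ⟨⟨b, hb.1⟩, Finset.mem_filter.mpr ⟨Finset.mem_univ _, hb.2⟩, rfl⟩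

lemma card_tset (m n : ℕ) : (tset m n).card = (m + 1) / 2 * ((n + 1) / 2) := by
  have e1 : tset m n = Finset.univ.filter
      (fun p : Fin m × Fin n => p.1.val % 2 = 0 ∧ p.2.val % 2 = 0) := by
    unfold tset
    apply Finset.filter_congr
    intro p _
    simp [Nat.odd_add_one, Nat.not_odd_iff_even, Nat.even_iff]
  rw [e1, ← Finset.univ_product_univ,
    Finset.filter_product (fun i : Fin m => i.val % 2 = 0) (fun j : Fin n => j.val % 2 = 0),
    Finset.card_product, card_even_fin, card_even_fin]

end KingParity


/-- There is a parity-reversing, fixed-point-free involution on the dominating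
sets of the `m × n` king graph other than `T` (the set of all vertices with both
board coordinates odd).  Consequently the numbers of dominating sets of even and
of odd size differ by exactly `1`, the excess lying on the side of the parity of
`⌈m/2⌉ * ⌈n/2⌉`. -/
theorem king_parity_involution (m n : ℕ) :
    (∃ f : Finset (Fin m × Fin n) → Finset (Fin m × Fin n),
      ∀ S, IsDomSet (kingGraph m n) S →
        S ≠ Finset.univ.filter (fun p : Fin m × Fin n =>
          Odd (p.1.val + 1) ∧ Odd (p.2.val + 1)) →
        IsDomSet (kingGraph m n) (f S) ∧
        f S ≠ Finset.univ.filter (fun p : Fin m × Fin n =>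
          Odd (p.1.val + 1) ∧ Odd (p.2.val + 1)) ∧
        f (f S) = S ∧ f S ≠ S ∧ (Even (f S).card ↔ ¬ Even S.card)) ∧
    ((Finset.univ.filter (fun S => IsDomSet (kingGraph m n) S ∧ Even S.card)).card : ℤ) -
      ((Finset.univ.filter (fun S => IsDomSet (kingGraph m n) S ∧ Odd S.card)).card : ℤ) =
      (-1 : ℤ) ^ ((m + 1) / 2 * ((n + 1) / 2)) := by
  constructor
  · exact ⟨KingParity.invol m n, fun S hd hne => KingParity.invol_spec hd hne⟩
  · set D : Finset (Finset (Fin m × Fin n)) :=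
      Finset.univ.filter (fun S => IsDomSet (kingGraph m n) S) with hD
    have hT : KingParity.tset m n ∈ D :=
      Finset.mem_filter.mpr ⟨Finset.mem_univ _, KingParity.tset_dom m n⟩
    have hsum : ∑ S ∈ D, (-1 : ℤ) ^ S.card = (-1) ^ ((m + 1) / 2 * ((n + 1) / 2)) := by
      rw [← Finset.add_sum_erase D _ hT, KingParity.card_tset m n]
      have hz : ∑ S ∈ D.erase (KingParity.tset m n), (-1 : ℤ) ^ S.card = 0 := by
        have hmem : ∀ S ∈ D.erase (KingParity.tset m n),
            IsDomSet (kingGraph m n) S ∧ S ≠ KingParity.tset m n := by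
          intro S hS
          rw [Finset.mem_erase, hD, Finset.mem_filter] at hS
          exact ⟨hS.2.2, hS.1⟩
        refine Finset.sum_involution (fun S _ => KingParity.invol m n S) ?_ ?_ ?_ ?_
        · intro S hS
          obtain ⟨hd, hne⟩ := hmem S hS
          obtain ⟨_, _, _, _, hpar⟩ := KingParity.invol_spec hd hne
          rw [add_comm]
          exact KingParity.neg_one_pow_add_eq_zero hpar
        · intro S hS _
          obtain ⟨hd, hne⟩ := hmem S hS
          exact (KingParity.invol_spec hd hne).2.2.2.1
        · intro S hS
          obtain ⟨hd, hne⟩ := hmem S hS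
          obtain ⟨hd', hne', _, _, _⟩ := KingParity.invol_spec hd hne
          exact Finset.mem_erase.mpr ⟨hne', Finset.mem_filter.mpr ⟨Finset.mem_univ _, hd'⟩⟩
        · intro S hS
          obtain ⟨hd, hne⟩ := hmem S hS
          exact (KingParity.invol_spec hd hne).2.2.1
      rw [hz, add_zero]
    have h1 : ∑ S ∈ D.filter (fun S => Even S.card), (-1 : ℤ) ^ S.card
        = ((D.filter (fun S => Even S.card)).card : ℤ) := by
      rw [Finset.sum_congr rfl (fun S hS => ((Finset.mem_filter.mp hS).2).neg_one_pow),
        Finset.sum_const, nsmul_eq_mul, mul_one]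
    have h2 : ∑ S ∈ D.filter (fun S => ¬ Even S.card), (-1 : ℤ) ^ S.card
        = -((D.filter (fun S => ¬ Even S.card)).card : ℤ) := by
      rw [Finset.sum_congr rfl
        (fun S hS => (Nat.not_even_iff_odd.mp (Finset.mem_filter.mp hS).2).neg_one_pow),
        Finset.sum_const, nsmul_eq_mul, mul_neg_one]
    have e1 : Finset.univ.filter (fun S => IsDomSet (kingGraph m n) S ∧ Even S.card)
        = D.filter (fun S => Even S.card) := (Finset.filter_filter _ _ _).symm
    have e2 : Finset.univ.filter (fun S => IsDomSet (kingGraph m n) S ∧ Odd S.card)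
        = D.filter (fun S => ¬ Even S.card) := by
      rw [Finset.filter_filter]
      apply Finset.filter_congr
      intro S _
      rw [← Nat.not_even_iff_odd]
    rw [e1, e2, ← h1, sub_eq_add_neg, ← h2,
      Finset.sum_filter_add_sum_filter_not D (fun S => Even S.card)]
    exact hsum
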